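/- The quantity ab + ac + bc − s² is invariant under multiplication of the column vector (a,b,c,s) by each of the 4×4 integer matrices U, V, W. -/

import Mathlib

open Matrix

/-- The quadratic form `ab + ac + bc − s²` is invariant under `U`, `V`, `W`. -/
theorem form_invariant_UVW
    (U V W : Matrix (Fin 4) (Fin 4) ℤ)
    (hU : U = !![1,1,1,2; 0,1,0,0; 0,0,1,0; 0,1,1,1])
    (hV : V = !![1,0,0,0; 1,1,1,2; 0,0,1,0; 1,0,1,1])
    (hW : W = !![1,0,0,0; 0,1,0,0; 1,1,1,2; 1,1,0,1])
    (Q : (Fin 4 → ℤ) → ℤ)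
    (hQ : ∀ v, Q v = v 0 * v 1 + v 0 * v 2 + v 1 * v 2 - (v 3) ^ 2) :
    ∀ v : Fin 4 → ℤ, Q (U.mulVec v) = Q v ∧ Q (V.mulVec v) = Q v ∧ Q (W.mulVec v) = Q v := by
  intro v
  subst hU hV hW
  norm_num [hQ, mulVec, dotProduct, Fin.sum_univ_four, Matrix.vecHead, Matrix.vecTail, Matrix.cons_val_two, Matrix.cons_val_three]
  refine ⟨by ring, by ring, by ring⟩
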